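/- The convex set S = {(x₁,x₂) ∈ ℝ² : x₁ ≥ 0, x₁² - x₁⁴ - x₂⁴ ≥ 0} equals the projection onto (x₁,x₂) of the set of (x₁,x₂,u₁,u₂) such that [[x₁-u₁, u₂],[u₂, x₁+u₁]] ⪰ 0, [[u₁, x₁],[x₁, 1]] ⪰ 0, and [[u₂, x₂],[x₂, 1]] ⪰ 0. -/

import Mathlib

lemma psd2_iff (a b c : ℝ) :
    (!![a, b; b, c] : Matrix (Fin 2) (Fin 2) ℝ).PosSemidef ↔
      0 ≤ a ∧ 0 ≤ c ∧ b ^ 2 ≤ a * c := by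
  constructor
  · intro h
    have key : ∀ s t : ℝ, 0 ≤ a * s ^ 2 + 2 * b * s * t + c * t ^ 2 := by
      intro s t
      have := (Matrix.posSemidef_iff_dotProduct_mulVec.mp h).2 ![s, t]
      simp [dotProduct, Matrix.mulVec, Fin.sum_univ_two] at this
      nlinarith [this]
    have ha : 0 ≤ a := by have := key 1 0; linarith
    have hc : 0 ≤ c := by have := key 0 1; linarith
    refine ⟨ha, hc, ?_⟩
    rcases ha.eq_or_lt with h0 | h0
    · by_cases hb : b = 0
      · simp [hb]; positivity
      · exfalso
        have hk := key (-(c + 1) / (2 * b)) 1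
        rw [← h0] at hk
        have : 2 * b * (-(c + 1) / (2 * b)) = -(c + 1) := by field_simp
        nlinarith [hk]
    · have := key (-b) a
      nlinarith
  · rintro ⟨ha, hc, hb⟩
    refine Matrix.posSemidef_iff_dotProduct_mulVec.mpr ⟨?_, ?_⟩
    · ext i j
      fin_cases i <;> fin_cases j <;> simp [Matrix.conjTranspose_apply]
    · intro x
      simp [dotProduct, Matrix.mulVec, Fin.sum_univ_two]
      rcases ha.eq_or_lt with h0 | h0
      · have hb2 : b ^ 2 = 0 := le_antisymm (by nlinarith) (sq_nonneg b)
        have hb0 : b = 0 := by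
          have := sq_eq_zero_iff.mp hb2
          simpa using this
        subst hb0
        rw [← h0]
        have := mul_nonneg hc (mul_self_nonneg (x 1))
        nlinarith
      · nlinarith [sq_nonneg (a * x 0 + b * x 1),
          mul_nonneg (sub_nonneg.2 hb) (sq_nonneg (x 1))]

/-- SDP representation of the singular convex set `{x₁ ≥ 0, x₁² - x₁⁴ - x₂⁴ ≥ 0}`. -/
theorem sdp_representation_tacnode_quartic :
    {p : ℝ × ℝ | p.1 ≥ 0 ∧ p.1^2 - p.1^4 - p.2^4 ≥ 0}
      = {p : ℝ × ℝ | ∃ u₁ u₂ : ℝ,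
          (!![p.1 - u₁, u₂; u₂, p.1 + u₁] : Matrix (Fin 2) (Fin 2) ℝ).PosSemidef ∧
          (!![u₁, p.1; p.1, 1] : Matrix (Fin 2) (Fin 2) ℝ).PosSemidef ∧
          (!![u₂, p.2; p.2, 1] : Matrix (Fin 2) (Fin 2) ℝ).PosSemidef} := by
  ext ⟨x₁, x₂⟩
  simp only [Set.mem_setOf_eq, psd2_iff]
  constructor
  · rintro ⟨hx, hq⟩
    refine ⟨x₁ ^ 2, x₂ ^ 2, ⟨?_, by positivity, by nlinarith⟩,
      ⟨by positivity, zero_le_one, by nlinarith⟩,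
      ⟨by positivity, zero_le_one, by nlinarith⟩⟩
    nlinarith [sq_nonneg x₁, sq_nonneg (x₁ - 1), sq_nonneg (x₂ ^ 2)]
  · rintro ⟨u₁, u₂, ⟨h1, h2, h3⟩, ⟨h4, _, h5⟩, ⟨h6, _, h7⟩⟩
    constructor
    · nlinarith
    · nlinarith [sq_nonneg (u₁ - x₁ ^ 2), sq_nonneg (u₂ - x₂ ^ 2), sq_nonneg u₂]
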